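/- Let K and N be positive integers, ε > 0, and f, x, λ real numbers. If |f − x| ≤ ε and |λ| ≤ K·ε/(K+N), then |(f + λ) − (K·f + N·x)/(K+N)| ≤ ε. (That is, if the manipulative group's opinion lies in the confidence interval of the normal group at some time, it still does after one iteration.) -/

import Mathlib

theorem hk_one_step_stay_in_confidence
    (K N : ℕ) (hK : 0 < K) (hN : 0 < N) (ε : ℝ) (hε : 0 < ε)
    (f x l : ℝ)
    (h1 : |f - x| ≤ ε)
    (h2 : |l| ≤ (K : ℝ) * ε / ((K : ℝ) + (N : ℝ))) :
    |(f + l) - ((K : ℝ) * f + (N : ℝ) * x) / ((K : ℝ) + (N : ℝ))| ≤ ε := by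
  have hKpos : (0:ℝ) < K := Nat.cast_pos.mpr hK
  have hNpos : (0:ℝ) < N := Nat.cast_pos.mpr hN
  have hS : (0:ℝ) < (K:ℝ) + N := by linarith
  have key : (f + l) - ((K : ℝ) * f + (N : ℝ) * x) / ((K : ℝ) + (N : ℝ))
      = l + (N:ℝ) * (f - x) / ((K:ℝ) + N) := by
    field_simp; ring
  rw [key]
  have h3 : |(N:ℝ) * (f - x) / ((K:ℝ) + N)| ≤ (N:ℝ) * ε / ((K:ℝ) + N) := by
    rw [abs_div, abs_mul, abs_of_pos hS, abs_of_pos hNpos]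
    gcongr
  calc |l + (N:ℝ) * (f - x) / ((K:ℝ) + N)| ≤ |l| + |(N:ℝ) * (f - x) / ((K:ℝ) + N)| :=
        abs_add_le _ _
    _ ≤ (K:ℝ) * ε / ((K:ℝ) + N) + (N:ℝ) * ε / ((K:ℝ) + N) := add_le_add h2 h3
    _ = ε := by field_simp
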